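/- Assume condition (★). Then for every increasing function f : {0,1}^E → ℝ, φ^f_{G;β,q,ĥ}(f) ≤ ℙ_{G;β}(f), where ℙ_{G;β} is the product (Bernoulli) probability measure on {0,1}^E under which each edge e is independently open with probability p_e = 1 − exp(−qβJ_e). -/

import Mathlib

open Classical Finset

noncomputable section

/-- Two vertices are joined by an open edge of the configuration `ω`. -/
def OpenAdj {V E : Type*} (ends : E → V × V) (ω : E → Bool) (x y : V) : Prop :=
  ∃ e, ω e = true ∧ (ends e = (x, y) ∨ ends e = (y, x))

/-- `x` and `y` lie in the same open cluster of the configuration `ω`. -/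
def ConnIn {V E : Type*} (ends : E → V × V) (ω : E → Bool) (x y : V) : Prop :=
  Relation.ReflTransGen (OpenAdj ends ω) x y

/-- The open cluster of the vertex `x` in the configuration `ω`. -/
def cluster {V E : Type*} [Fintype V] (ends : E → V × V) (ω : E → Bool) (x : V) : Finset V :=
  Finset.univ.filter fun y => ConnIn ends ω x y

/-- The collection of all open clusters of the configuration `ω`
(the vertex sets of the connected components of the open subgraph). -/
def clusters {V E : Type*} [Fintype V] (ends : E → V × V) (ω : E → Bool) :
    Finset (Finset V) :=
  Finset.univ.image fun x => cluster ends ω x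

/-- The free cluster weight `Θ^f[C] = Σ_{m=1}^q exp(β Σ_{x∈C} h_{x,m})`. -/
def thetaF {V : Type*} (q : ℕ) (β : ℝ) (h : V → Fin q → ℝ) (C : Finset V) : ℝ :=
  ∑ m : Fin q, Real.exp (β * ∑ x ∈ C, h x m)

/-- The max-wired cluster weight: `Θ^f[C]` for clusters not touching the boundary `Vb`,
and `exp(β Σ_{x∈C} hmax x)` for clusters touching the boundary. -/
def thetaW {V : Type*} (q : ℕ) (β : ℝ) (h : V → Fin q → ℝ) (hmax : V → ℝ)
    (Vb : Finset V) (C : Finset V) : ℝ :=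
  if C ∩ Vb = ∅ then thetaF q β h C else Real.exp (β * ∑ x ∈ C, hmax x)

/-- The function `g^f(ω) = Π_C Θ^f[C]`, the product over the open clusters of `ω`. -/
def gFree {V E : Type*} [Fintype V] (ends : E → V × V) (q : ℕ) (β : ℝ)
    (h : V → Fin q → ℝ) (ω : E → Bool) : ℝ :=
  ∏ C ∈ clusters ends ω, thetaF q β h C

/-- The function `g^w(ω) = Π_C Θ^w[C]`, the product over the open clusters of `ω`. -/
def gWired {V E : Type*} [Fintype V] (ends : E → V × V) (q : ℕ) (β : ℝ)
    (h : V → Fin q → ℝ) (hmax : V → ℝ) (Vb : Finset V) (ω : E → Bool) : ℝ :=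
  ∏ C ∈ clusters ends ω, thetaW q β h hmax Vb C

/-- The edge factor `Π_e (exp(qβJ_e) − 1)^{ω_e}`. -/
def edgeFactor {E : Type*} [Fintype E] (q : ℕ) (β : ℝ) (J : E → ℝ) (ω : E → Bool) : ℝ :=
  ∏ e : E, if ω e then Real.exp ((q : ℝ) * β * J e) - 1 else 1

/-- The unnormalised weight of the free random-cluster measure. -/
def freeWeight {V E : Type*} [Fintype V] [Fintype E] (ends : E → V × V) (q : ℕ) (β : ℝ)
    (J : E → ℝ) (h : V → Fin q → ℝ) (ω : E → Bool) : ℝ :=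
  edgeFactor q β J ω * gFree ends q β h ω

/-- The expectation `φ^f_{G;β,q,ĥ}(f)` under the free random-cluster measure. -/
def freeExp {V E : Type*} [Fintype V] [Fintype E] (ends : E → V × V) (q : ℕ) (β : ℝ)
    (J : E → ℝ) (h : V → Fin q → ℝ) (f : (E → Bool) → ℝ) : ℝ :=
  (∑ ω : E → Bool, f ω * freeWeight ends q β J h ω) /
    ∑ ω : E → Bool, freeWeight ends q β J h ω

/-- The unnormalised weight of the max-wired random-cluster measure: supported on
configurations opening all boundary edges `Eb`, with edge factor over interior edges
and cluster weights `Θ^w`. -/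
def wiredWeight {V E : Type*} [Fintype V] [Fintype E] (ends : E → V × V) (q : ℕ) (β : ℝ)
    (J : E → ℝ) (h : V → Fin q → ℝ) (hmax : V → ℝ) (Vb : Finset V) (Eb : Finset E)
    (ω : E → Bool) : ℝ :=
  (if ∀ e ∈ Eb, ω e = true then (1 : ℝ) else 0) *
    (∏ e ∈ Ebᶜ, if ω e then Real.exp ((q : ℝ) * β * J e) - 1 else 1) *
    gWired ends q β h hmax Vb ω

/-- The expectation `φ^w_{G;β,q,ĥ}(f)` under the max-wired random-cluster measure. -/
def wiredExp {V E : Type*} [Fintype V] [Fintype E] (ends : E → V × V) (q : ℕ) (β : ℝ)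
    (J : E → ℝ) (h : V → Fin q → ℝ) (hmax : V → ℝ) (Vb : Finset V) (Eb : Finset E)
    (f : (E → Bool) → ℝ) : ℝ :=
  (∑ ω : E → Bool, f ω * wiredWeight ends q β J h hmax Vb Eb ω) /
    ∑ ω : E → Bool, wiredWeight ends q β J h hmax Vb Eb ω

/-- The expectation under the Bernoulli product measure in which each edge `e` is
independently open with probability `p_e = 1 − exp(−qβJ_e)`. -/
def bernExp {E : Type*} [Fintype E] (q : ℕ) (β : ℝ) (J : E → ℝ)
    (f : (E → Bool) → ℝ) : ℝ :=
  ∑ ω : E → Bool, f ω *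
    ∏ e : E, if ω e then 1 - Real.exp (-((q : ℝ) * β * J e))
      else Real.exp (-((q : ℝ) * β * J e))

/-- A function of configurations is increasing for the coordinatewise order. -/
def IncreasingFn {E : Type*} (f : (E → Bool) → ℝ) : Prop :=
  ∀ ⦃ω ω' : E → Bool⦄, (∀ e, ω e ≤ ω' e) → f ω ≤ f ω'

/-- Condition (★): there is a common colour `m*` attaining the maximal field
value `h_{x,max}` at every vertex `x`. -/
def StarCond {V : Type*} (q : ℕ) (h : V → Fin q → ℝ) : Prop :=
  ∃ m : Fin q, ∀ x k, h x k ≤ h x m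

/-- Compatibility of the boundary data: every boundary edge joins an interior vertex to a
boundary vertex, and every interior edge joins two interior vertices (this is the structure
of `E ∪ ∂E` for a finite subgraph `G = (V,E)` of the hypercubic lattice, with `Vb = ∂V`
and `Eb = ∂E`). -/
def BdryCompatible {V E : Type*} (ends : E → V × V) (Vb : Finset V) (Eb : Finset E) : Prop :=
  (∀ e ∈ Eb, ((ends e).1 ∈ Vb ∧ (ends e).2 ∉ Vb) ∨ ((ends e).1 ∉ Vb ∧ (ends e).2 ∈ Vb)) ∧
    ∀ e ∉ Eb, (ends e).1 ∉ Vb ∧ (ends e).2 ∉ Vb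

/-- Indicator of the event `{x ↔ y}`. -/
def connInd {V E : Type*} (ends : E → V × V) (x y : V) (ω : E → Bool) : ℝ :=
  if ConnIn ends ω x y then 1 else 0

/-- Indicator of the event `{x ↔ S}` that some vertex of `S` lies in the open cluster
of `x`. -/
def connToSetInd {V E : Type*} (ends : E → V × V) (x : V) (S : Finset V)
    (ω : E → Bool) : ℝ :=
  if ∃ y ∈ S, ConnIn ends ω x y then 1 else 0


open Classical Finset Function

section Aux
variable {V E : Type*}

lemma openAdj_symm (ends : E → V × V) (ω : E → Bool) : Symmetric (OpenAdj ends ω) := by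
  rintro x y ⟨e, he, h | h⟩
  exacts [⟨e, he, Or.inr h⟩, ⟨e, he, Or.inl h⟩]

lemma connIn_symm {ends : E → V × V} {ω : E → Bool} {x y : V} (h : ConnIn ends ω x y) :
    ConnIn ends ω y x :=
  (@Relation.ReflTransGen.stdSymm _ _ ⟨fun _ _ hh => openAdj_symm ends ω hh⟩).symm _ _ h

lemma connIn_mono {ends : E → V × V} {ω ω' : E → Bool} (hle : ∀ e, ω e ≤ ω' e)
    {x y : V} (h : ConnIn ends ω x y) : ConnIn ends ω' x y := by
  refine Relation.ReflTransGen.mono ?_ x y h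
  rintro a b ⟨e, he, hor⟩
  refine ⟨e, ?_, hor⟩
  have := hle e; rw [he] at this; exact le_antisymm (Bool.le_true _) this

variable [Fintype V]

lemma mem_cluster {ends : E → V × V} {ω : E → Bool} {x y : V} :
    y ∈ cluster ends ω x ↔ ConnIn ends ω x y := by simp [cluster]

lemma cluster_eq_of_conn {ends : E → V × V} {ω : E → Bool} {x y : V}
    (h : ConnIn ends ω x y) : cluster ends ω x = cluster ends ω y := by
  ext z
  simp only [mem_cluster]
  exact ⟨fun hz => (connIn_symm h).trans hz, fun hz => h.trans hz⟩

lemma self_mem_cluster {ends : E → V × V} {ω : E → Bool} {x : V} :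
    x ∈ cluster ends ω x := mem_cluster.2 .refl

lemma cluster_mem_clusters {ends : E → V × V} {ω : E → Bool} (x : V) :
    cluster ends ω x ∈ clusters ends ω := Finset.mem_image_of_mem _ (mem_univ x)

end Aux
open Classical Finset Function

section Upd
variable {V E : Type*} [DecidableEq E] {ends : E → V × V} {ω : E → Bool} {a : E}

lemma connIn_update_true_iff (u v : V) :
    ConnIn ends (update ω a true) u v ↔
      ConnIn ends (update ω a false) u v
      ∨ (ConnIn ends (update ω a false) u (ends a).1 ∧
          ConnIn ends (update ω a false) (ends a).2 v)
      ∨ (ConnIn ends (update ω a false) u (ends a).2 ∧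
          ConnIn ends (update ω a false) (ends a).1 v) := by
  set ω0 := update ω a false with hω0
  have hle : ∀ e, ω0 e ≤ update ω a true e := by
    intro e
    by_cases he : e = a
    · subst he; simp [ω0]
    · simp [ω0, update_of_ne he]
  have hxy : ConnIn ends (update ω a true) (ends a).1 (ends a).2 :=
    Relation.ReflTransGen.single ⟨a, by simp, Or.inl (by simp)⟩
  constructor
  · intro h
    induction h with
    | refl => exact Or.inl .refl
    | @tail b c hub hbc ih =>
      obtain ⟨e, he, hor⟩ := hbc
      by_cases hea : e = a
      · subst hea
        rcases hor with h1 | h1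
        · -- ends e = (b, c):  b = x, c = y
          have hb : (ends e).1 = b := by rw [h1]
          have hc : (ends e).2 = c := by rw [h1]
          subst hb; subst hc
          rcases ih with h2 | ⟨h2, h3⟩ | ⟨h2, h3⟩
          · exact Or.inr (Or.inl ⟨h2, .refl⟩)
          · exact Or.inr (Or.inl ⟨h2, .refl⟩)
          · exact Or.inl h2
        · -- ends e = (c, b): b = y, c = x
          have hb : (ends e).2 = b := by rw [h1]
          have hc : (ends e).1 = c := by rw [h1]
          subst hb; subst hc
          rcases ih with h2 | ⟨h2, h3⟩ | ⟨h2, h3⟩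
          · exact Or.inr (Or.inr ⟨h2, .refl⟩)
          · exact Or.inl h2
          · exact Or.inr (Or.inr ⟨h2, .refl⟩)
      · have hstep : OpenAdj ends ω0 b c := ⟨e, by simpa [ω0, update_of_ne hea] using he, hor⟩
        rcases ih with h2 | ⟨h2, h3⟩ | ⟨h2, h3⟩
        · exact Or.inl (h2.tail hstep)
        · exact Or.inr (Or.inl ⟨h2, h3.tail hstep⟩)
        · exact Or.inr (Or.inr ⟨h2, h3.tail hstep⟩)
  · rintro (h | ⟨h1, h2⟩ | ⟨h1, h2⟩)
    · exact connIn_mono hle h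
    · exact ((connIn_mono hle h1).trans hxy).trans (connIn_mono hle h2)
    · exact ((connIn_mono hle h1).trans (connIn_symm hxy)).trans (connIn_mono hle h2)

end Upd
set_option linter.unusedSectionVars false
section GFree
variable {V E : Type*} [Fintype V] [DecidableEq E] {ends : E → V × V} {ω : E → Bool} {a : E}

lemma thetaF_pos {q : ℕ} (hq : 0 < q) (β : ℝ) (h : V → Fin q → ℝ) (C : Finset V) :
    0 < thetaF q β h C := by
  haveI : Nonempty (Fin q) := ⟨⟨0, hq⟩⟩
  exact Finset.sum_pos (fun m _ => Real.exp_pos _) univ_nonempty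

lemma thetaF_union_le {q : ℕ} (β : ℝ) (h : V → Fin q → ℝ) {C C' : Finset V}
    (hd : Disjoint C C') : thetaF q β h (C ∪ C') ≤ thetaF q β h C * thetaF q β h C' := by
  unfold thetaF
  rw [Finset.sum_mul]
  refine Finset.sum_le_sum fun m _ => ?_
  rw [Finset.sum_union hd, mul_add, Real.exp_add]
  refine mul_le_mul_of_nonneg_left ?_ (Real.exp_pos _).le
  exact Finset.single_le_sum (f := fun k => Real.exp (β * ∑ x ∈ C', h x k))
    (fun k _ => (Real.exp_pos _).le) (mem_univ m)

lemma gFree_pos {q : ℕ} (hq : 0 < q) (β : ℝ) (h : V → Fin q → ℝ) (ω : E → Bool) :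
    0 < gFree ends q β h ω :=
  Finset.prod_pos fun C _ => thetaF_pos hq β h C

/-- Case A: endpoints already connected. -/
lemma clusters_update_of_conn
    (hc : ConnIn ends (update ω a false) (ends a).1 (ends a).2) :
    clusters ends (update ω a true) = clusters ends (update ω a false) := by
  have key : ∀ u v, ConnIn ends (update ω a true) u v ↔ ConnIn ends (update ω a false) u v := by
    intro u v
    rw [connIn_update_true_iff]
    constructor
    · rintro (h | ⟨h1, h2⟩ | ⟨h1, h2⟩)
      · exact h
      · exact (h1.trans hc).trans h2
      · exact (h1.trans (connIn_symm hc)).trans h2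
    · exact Or.inl
  have : ∀ z, cluster ends (update ω a true) z = cluster ends (update ω a false) z := by
    intro z; ext y; simp only [mem_cluster, key]
  unfold clusters
  exact Finset.image_congr fun z _ => this z

/-- Case B helper: cluster of a vertex connected to an endpoint. -/
lemma cluster_update_touch (hnc : ¬ ConnIn ends (update ω a false) (ends a).1 (ends a).2)
    {z : V} (hz : ConnIn ends (update ω a false) z (ends a).1 ∨
      ConnIn ends (update ω a false) z (ends a).2) :
    cluster ends (update ω a true) z =
      cluster ends (update ω a false) (ends a).1 ∪ cluster ends (update ω a false) (ends a).2 := by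
  ext v
  simp only [mem_cluster, Finset.mem_union, connIn_update_true_iff]
  rcases hz with hz | hz
  · constructor
    · rintro (h | ⟨h1, h2⟩ | ⟨h1, h2⟩)
      · exact Or.inl ((connIn_symm hz).trans h)
      · exact Or.inr h2
      · exact absurd ((connIn_symm hz).trans h1) hnc
    · rintro (h | h)
      · exact Or.inl (hz.trans h)
      · exact Or.inr (Or.inl ⟨hz, h⟩)
  · constructor
    · rintro (h | ⟨h1, h2⟩ | ⟨h1, h2⟩)
      · exact Or.inr ((connIn_symm hz).trans h)
      · exact absurd ((connIn_symm h1).trans hz) hnc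
      · exact Or.inl h2
    · rintro (h | h)
      · exact Or.inr (Or.inr ⟨hz, h⟩)
      · exact Or.inl (hz.trans h)

lemma cluster_update_free
    {z : V} (hzx : ¬ ConnIn ends (update ω a false) z (ends a).1)
    (hzy : ¬ ConnIn ends (update ω a false) z (ends a).2) :
    cluster ends (update ω a true) z = cluster ends (update ω a false) z := by
  ext v
  simp only [mem_cluster, connIn_update_true_iff]
  constructor
  · rintro (h | ⟨h1, h2⟩ | ⟨h1, h2⟩)
    · exact h
    · exact absurd h1 hzx
    · exact absurd h1 hzy
  · exact Or.inl

lemma clusters_update_of_not_conn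
    (hnc : ¬ ConnIn ends (update ω a false) (ends a).1 (ends a).2) :
    clusters ends (update ω a true) =
      insert (cluster ends (update ω a false) (ends a).1 ∪
          cluster ends (update ω a false) (ends a).2)
        (clusters ends (update ω a false) \
          {cluster ends (update ω a false) (ends a).1,
           cluster ends (update ω a false) (ends a).2}) := by
  set x := (ends a).1; set y := (ends a).2
  set Cx := cluster ends (update ω a false) x with hCx
  set Cy := cluster ends (update ω a false) y with hCy
  ext C
  simp only [clusters, Finset.mem_image, Finset.mem_insert, Finset.mem_sdiff,
    Finset.mem_univ, true_and, Finset.mem_insert, Finset.mem_singleton]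
  constructor
  · rintro ⟨z, rfl⟩
    by_cases hz : ConnIn ends (update ω a false) z x ∨ ConnIn ends (update ω a false) z y
    · exact Or.inl (cluster_update_touch hnc hz)
    · push_neg at hz
      rw [cluster_update_free hz.1 hz.2]
      refine Or.inr ⟨⟨z, rfl⟩, ?_⟩
      rintro (hh | hh) <;>
        [skip; skip] <;> {
        first
        | (have hm : z ∈ cluster ends (update ω a false) z := self_mem_cluster
           rw [hh] at hm
           first
           | exact hz.1 (connIn_symm (mem_cluster.1 hm))
           | exact hz.2 (connIn_symm (mem_cluster.1 hm))) }
  · rintro (rfl | ⟨⟨z, rfl⟩, hno⟩)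
    · exact ⟨x, cluster_update_touch hnc (Or.inl .refl)⟩
    · refine ⟨z, cluster_update_free ?_ ?_⟩
      · intro hh; exact hno (Or.inl (cluster_eq_of_conn hh))
      · intro hh; exact hno (Or.inr (cluster_eq_of_conn hh))

lemma gFree_update_le {q : ℕ} (hq : 0 < q) (β : ℝ) (h : V → Fin q → ℝ) :
    gFree ends q β h (update ω a true) ≤ gFree ends q β h (update ω a false) := by
  by_cases hc : ConnIn ends (update ω a false) (ends a).1 (ends a).2
  · unfold gFree; rw [clusters_update_of_conn hc]
  · set x := (ends a).1; set y := (ends a).2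
    set Cx := cluster ends (update ω a false) x with hCx
    set Cy := cluster ends (update ω a false) y with hCy
    have hxCx : x ∈ Cx := self_mem_cluster
    have hyCy : y ∈ Cy := self_mem_cluster
    have hne : Cx ≠ Cy := by
      intro hh
      have h2 := hxCx
      rw [hh] at h2
      exact hc (connIn_symm (mem_cluster.1 h2))
    have hdisj : Disjoint Cx Cy := by
      rw [Finset.disjoint_left]
      intro z hzx hzy
      exact hc ((mem_cluster.1 hzx).trans (connIn_symm (mem_cluster.1 hzy)))
    have hsub : ({Cx, Cy} : Finset (Finset V)) ⊆ clusters ends (update ω a false) := by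
      intro C hC
      rcases Finset.mem_insert.1 hC with rfl | hC
      · exact cluster_mem_clusters x
      · rw [Finset.mem_singleton.1 hC]; exact cluster_mem_clusters y
    have hnotmem : Cx ∪ Cy ∉
        clusters ends (update ω a false) \ ({Cx, Cy} : Finset (Finset V)) := by
      rintro hmem
      rw [Finset.mem_sdiff] at hmem
      obtain ⟨hmem1, hmem2⟩ := hmem
      obtain ⟨z, hz⟩ := Finset.mem_image.1 hmem1
      have hx' : x ∈ cluster ends (update ω a false) z := hz.2 ▸ Finset.mem_union_left _ hxCx
      have : cluster ends (update ω a false) z = Cx :=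
        cluster_eq_of_conn (mem_cluster.1 hx')
      exact hmem2 (by rw [hz.2.symm.trans this]; exact Finset.mem_insert_self _ _)
    unfold gFree
    rw [clusters_update_of_not_conn hc, Finset.prod_insert hnotmem,
      ← Finset.prod_sdiff hsub, Finset.prod_pair hne]
    have hprod : (0:ℝ) ≤ ∏ C ∈ clusters ends (update ω a false) \ ({Cx, Cy} : Finset (Finset V)),
        thetaF q β h C :=
      (Finset.prod_pos fun C _ => thetaF_pos hq β h C).le
    exact (mul_le_mul_of_nonneg_right (thetaF_union_le β h hdisj) hprod).trans_eq
      (mul_comm _ _)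

end GFree
section Ratio
variable {V E : Type*} [Fintype V] [Fintype E] [DecidableEq E]

lemma edgeFactor_update (q : ℕ) (β : ℝ) (J : E → ℝ) (ω : E → Bool) (a : E) (b : Bool) :
    edgeFactor q β J (update ω a b) =
      (if b then Real.exp ((q : ℝ) * β * J a) - 1 else 1) *
        ∏ e ∈ univ.erase a, (if ω e then Real.exp ((q : ℝ) * β * J e) - 1 else 1) := by
  unfold edgeFactor
  rw [← Finset.mul_prod_erase univ _ (mem_univ a)]
  congr 1
  · rw [update_self]
  · exact Finset.prod_congr rfl fun e he =>
      by rw [update_of_ne (Finset.mem_erase.1 he).1]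

lemma edgeFactor_nonneg {q : ℕ} {β : ℝ} {J : E → ℝ} (hβ : 0 < β) (hJ : ∀ e, 0 ≤ J e)
    (ω : E → Bool) : 0 ≤ edgeFactor q β J ω := by
  refine Finset.prod_nonneg fun e _ => ?_
  split
  · have : (0:ℝ) ≤ (q : ℝ) * β * J e :=
      mul_nonneg (mul_nonneg (Nat.cast_nonneg q) hβ.le) (hJ e)
    have := Real.one_le_exp this
    linarith
  · norm_num

lemma freeWeight_nonneg {q : ℕ} (hq : 0 < q) {β : ℝ} (hβ : 0 < β) {J : E → ℝ}
    (hJ : ∀ e, 0 ≤ J e) (h : V → Fin q → ℝ) (ends : E → V × V) (ω : E → Bool) :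
    0 ≤ freeWeight ends q β J h ω :=
  mul_nonneg (edgeFactor_nonneg hβ hJ ω) (gFree_pos hq β h ω).le

lemma freeWeight_ratio {q : ℕ} (hq : 0 < q) {β : ℝ} (hβ : 0 < β) {J : E → ℝ}
    (hJ : ∀ e, 0 ≤ J e) (h : V → Fin q → ℝ) (ends : E → V × V) (ω : E → Bool) (a : E) :
    Real.exp (-((q : ℝ) * β * J a)) * freeWeight ends q β J h (update ω a true) ≤
      (1 - Real.exp (-((q : ℝ) * β * J a))) * freeWeight ends q β J h (update ω a false) := by
  set x : ℝ := (q : ℝ) * β * J a with hx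
  have hx0 : 0 ≤ x := mul_nonneg (mul_nonneg (Nat.cast_nonneg q) hβ.le) (hJ a)
  have hQ : (0:ℝ) ≤ ∏ e ∈ univ.erase a,
      (if ω e then Real.exp ((q : ℝ) * β * J e) - 1 else 1) := by
    refine Finset.prod_nonneg fun e _ => ?_
    split
    · have : (0:ℝ) ≤ (q : ℝ) * β * J e :=
        mul_nonneg (mul_nonneg (Nat.cast_nonneg q) hβ.le) (hJ e)
      have := Real.one_le_exp this
      linarith
    · norm_num
  unfold freeWeight
  rw [edgeFactor_update, edgeFactor_update]
  simp only [if_true, if_false]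
  set Q : ℝ := ∏ e ∈ univ.erase a,
      (if ω e then Real.exp ((q : ℝ) * β * J e) - 1 else 1) with hq'
  set g1 := gFree ends q β h (update ω a true)
  set g0 := gFree ends q β h (update ω a false)
  have hg : g1 ≤ g0 := gFree_update_le hq β h
  have hg1 : 0 < g1 := gFree_pos hq β h _
  have key : Real.exp (-x) * (Real.exp x - 1) = 1 - Real.exp (-x) := by
    rw [mul_sub, ← Real.exp_add]
    simp
  calc Real.exp (-x) * ((Real.exp x - 1) * Q * g1)
      ≤ Real.exp (-x) * ((Real.exp x - 1) * Q * g0) := by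
        have hr : (0:ℝ) ≤ Real.exp x - 1 := by
          have := Real.one_le_exp hx0; linarith
        have := mul_le_mul_of_nonneg_left hg (mul_nonneg hr hQ)
        have := mul_le_mul_of_nonneg_left this (Real.exp_pos (-x)).le
        linarith [this]
    _ = (1 - Real.exp (-x)) * (1 * Q * g0) := by
        rw [← key]; ring
end Ratio
section Holley
variable {E : Type*} [Fintype E] [DecidableEq E]

/-- The flip-at-`a` involution. -/
def flipAt (a : E) : (E → Bool) ≃ (E → Bool) where
  toFun ω := update ω a (!ω a)
  invFun ω := update ω a (!ω a)
  left_inv ω := by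
    funext e
    by_cases he : e = a
    · subst he; simp
    · simp [update_of_ne he]
  right_inv ω := by
    funext e
    by_cases he : e = a
    · subst he; simp
    · simp [update_of_ne he]

lemma sum_split (a : E) (F : (E → Bool) → ℝ) :
    ∑ ω : E → Bool, F ω =
      ∑ ω : E → Bool, (if ω a then 0 else
        F (update ω a false) + F (update ω a true)) := by
  have h1 : ∑ ω : E → Bool, F ω
      = ∑ ω : E → Bool, ((if ω a then 0 else F ω) + (if ω a then F ω else 0)) := by
    refine Finset.sum_congr rfl fun ω _ => ?_
    by_cases h : ω a <;> simp [h]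
  rw [h1, Finset.sum_add_distrib]
  have h2 : ∑ ω : E → Bool, (if ω a then F ω else 0)
      = ∑ ω : E → Bool, (if ω a then 0 else F (update ω a true)) := by
    rw [← Equiv.sum_comp (flipAt a) (fun ω => if ω a then F ω else 0)]
    refine Finset.sum_congr rfl fun ω _ => ?_
    have hval : flipAt a ω a = !ω a := by simp [flipAt]
    by_cases h : ω a
    · simp only [flipAt, Equiv.coe_fn_mk, update_self, h]
      simp
    · have hω : ω a = false := by simpa using h
      simp only [flipAt, Equiv.coe_fn_mk, update_self, hω]
      simp
  rw [h2, ← Finset.sum_add_distrib]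
  refine Finset.sum_congr rfl fun ω _ => ?_
  by_cases h : ω a
  · simp [h]
  · have hω : ω a = false := by simpa using h
    have : update ω a false = ω := by
      funext e; by_cases he : e = a
      · subst he; simp [hω]
      · simp [update_of_ne he]
    simp [hω, this]

lemma sum_prod_bool (φ : E → Bool → ℝ) :
    (∑ ω : E → Bool, ∏ e, φ e (ω e)) = ∏ e, (φ e false + φ e true) := by
  have h := Finset.prod_univ_sum (fun _ : E => (Finset.univ : Finset Bool)) (fun e b => φ e b)
  rw [Fintype.piFinset_univ] at h
  rw [← h]
  refine Finset.prod_congr rfl fun e _ => ?_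
  rw [Fintype.sum_bool]; ring

lemma const_of_indep {w : (E → Bool) → ℝ}
    (hdep : ∀ (ω : E → Bool) (e : E) (b : Bool), w (update ω e b) = w ω) (ω ω' : E → Bool) :
    w ω = w ω' := by
  have key : ∀ T : Finset E, ∀ σ σ' : (E → Bool), (∀ e ∉ T, σ e = σ' e) → w σ = w σ' := by
    intro T
    induction T using Finset.induction_on with
    | empty =>
      intro σ σ' hagree
      have : σ = σ' := funext fun e => hagree e (by simp)
      rw [this]
    | @insert a T ha ih =>
      intro σ σ' hagree
      have h1 : w σ = w (update σ a (σ' a)) := (hdep σ a (σ' a)).symm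
      rw [h1]
      refine ih _ _ fun e he => ?_
      by_cases hea : e = a
      · subst hea; simp
      · rw [update_of_ne hea]
        exact hagree e (by simp [hea, he])
  exact key univ ω ω' fun e he => absurd (mem_univ e) he

lemma holley_induction (p : E → ℝ) (hp0 : ∀ e, 0 ≤ p e) (hp1 : ∀ e, p e ≤ 1)
    (S : Finset E) :
    ∀ (w f : (E → Bool) → ℝ), IncreasingFn f →
      (∀ ω, 0 ≤ w ω) →
      (∀ (ω : E → Bool) (e : E), e ∉ S → ∀ b, w (update ω e b) = w ω) →
      (∀ (ω : E → Bool) (e : E), e ∈ S →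
        (1 - p e) * w (update ω e true) ≤ p e * w (update ω e false)) →
      (∑ ω : E → Bool, f ω * (w ω * ∏ e ∈ Sᶜ, (if ω e then p e else 1 - p e)))
        ≤ (∑ ω : E → Bool, f ω * ∏ e, (if ω e then p e else 1 - p e)) *
          ∑ ω : E → Bool, w ω * ∏ e ∈ Sᶜ, (if ω e then p e else 1 - p e) := by
  induction S using Finset.induction_on with
  | empty =>
    intro w f hf hw0 hdep hratio
    have hconst : ∀ ω, w ω = w (fun _ => false) :=
      fun ω => const_of_indep (fun ω e b => hdep ω e (by simp) b) ω _
    set c := w (fun _ => false) with hc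
    have hone : (∑ ω : E → Bool, ∏ e, (if ω e then p e else 1 - p e)) = 1 := by
      rw [sum_prod_bool (fun e b => if b then p e else 1 - p e)]
      simp
    have h1 : ∑ ω : E → Bool, f ω * (w ω * ∏ e ∈ (∅ : Finset E)ᶜ, (if ω e then p e else 1 - p e))
        = c * ∑ ω : E → Bool, f ω * ∏ e, (if ω e then p e else 1 - p e) := by
      rw [Finset.mul_sum]
      refine Finset.sum_congr rfl fun ω _ => ?_
      rw [hconst ω, Finset.compl_empty]
      ring
    have h2 : ∑ ω : E → Bool, w ω * ∏ e ∈ (∅ : Finset E)ᶜ, (if ω e then p e else 1 - p e)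
        = c := by
      have : ∑ ω : E → Bool, w ω * ∏ e ∈ (∅ : Finset E)ᶜ, (if ω e then p e else 1 - p e)
          = c * ∑ ω : E → Bool, ∏ e, (if ω e then p e else 1 - p e) := by
        rw [Finset.mul_sum]
        refine Finset.sum_congr rfl fun ω _ => ?_
        rw [hconst ω, Finset.compl_empty]
      rw [this, hone, mul_one]
    rw [h1, h2]; exact le_of_eq (by ring)
  | @insert a S' ha ih =>
    intro w f hf hw0 hdep hratio
    have hpa0 := hp0 a
    have hpa1 := hp1 a
    set w' : (E → Bool) → ℝ := fun ω => w (update ω a false) + w (update ω a true) with hw'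
    set g : (E → Bool) → ℝ :=
      fun ω => (1 - p a) * f (update ω a false) + p a * f (update ω a true) with hgdef
    have bern_nonneg : ∀ (e : E) (b : Bool), (0:ℝ) ≤ (if b then p e else 1 - p e) := by
      intro e b; cases b <;> simp [hp0 e] <;> linarith [hp1 e]
    have haS : a ∉ ((insert a S')ᶜ : Finset E) := by simp
    have key1 : ∀ (ω : E → Bool) (b : Bool),
        (∏ e ∈ (insert a S')ᶜ, (if update ω a b e then p e else 1 - p e))
          = ∏ e ∈ (insert a S')ᶜ, (if ω e then p e else 1 - p e) := by
      intro ω b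
      refine Finset.prod_congr rfl fun e he => ?_
      have hea : e ≠ a := fun hh => haS (hh ▸ he)
      rw [update_of_ne hea]
    have hS'c : (S'ᶜ : Finset E) = insert a ((insert a S')ᶜ : Finset E) := by
      ext e
      simp only [Finset.mem_compl, Finset.mem_insert]
      by_cases hea : e = a
      · subst hea; simp [ha]
      · simp [hea]
    have keyP' : ∀ (ω : E → Bool),
        (∏ e ∈ S'ᶜ, (if ω e then p e else 1 - p e))
          = (if ω a then p a else 1 - p a) *
            ∏ e ∈ (insert a S')ᶜ, (if ω e then p e else 1 - p e) := by
      intro ω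
      rw [hS'c, Finset.prod_insert haS]
    have hupdle : ∀ (ω : E → Bool) (e : E), update ω a false e ≤ update ω a true e := by
      intro ω e
      by_cases hea : e = a
      · subst hea; simp
      · rw [update_of_ne hea, update_of_ne hea]
    -- pointwise inequality
    have point : ∀ ω : E → Bool,
        (if ω a then (0:ℝ) else
          (f (update ω a false) *
              (w (update ω a false) *
                ∏ e ∈ (insert a S')ᶜ, (if update ω a false e then p e else 1 - p e)) +
            f (update ω a true) *
              (w (update ω a true) *
                ∏ e ∈ (insert a S')ᶜ, (if update ω a true e then p e else 1 - p e))))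
          ≤ (if ω a then 0 else
            (g (update ω a false) *
                (w' (update ω a false) *
                  ∏ e ∈ S'ᶜ, (if update ω a false e then p e else 1 - p e)) +
              g (update ω a true) *
                (w' (update ω a true) *
                  ∏ e ∈ S'ᶜ, (if update ω a true e then p e else 1 - p e)))) := by
      intro ω
      by_cases hωa : ω a
      · simp [hωa]
      · rw [if_neg hωa, if_neg hωa]
        set P : ℝ := ∏ e ∈ (insert a S')ᶜ, (if ω e then p e else 1 - p e) with hP
        have hP0 : 0 ≤ P := Finset.prod_nonneg fun e _ => bern_nonneg e (ω e)
        rw [key1 ω false, key1 ω true]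
        have hg0 : g (update ω a false) = g ω := by
          simp only [hgdef, update_idem]
        have hg1 : g (update ω a true) = g ω := by
          simp only [hgdef, update_idem]
        have hwf : w' (update ω a false) = w' ω := by
          simp only [hw', update_idem]
        have hwt : w' (update ω a true) = w' ω := by
          simp only [hw', update_idem]
        have hPf : (∏ e ∈ S'ᶜ, (if update ω a false e then p e else 1 - p e))
            = (1 - p a) * P := by
          rw [keyP', update_self, key1 ω false, if_neg (by simp)]
        have hPt : (∏ e ∈ S'ᶜ, (if update ω a true e then p e else 1 - p e))
            = p a * P := by
          rw [keyP', update_self, key1 ω true, if_pos rfl]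
        rw [hg0, hg1, hwf, hwt, hPf, hPt]
        set f0 := f (update ω a false)
        set f1 := f (update ω a true)
        set w0 := w (update ω a false)
        set w1 := w (update ω a true)
        have hmono : f0 ≤ f1 := hf (hupdle ω)
        have hkey : (1 - p a) * w1 ≤ p a * w0 :=
          hratio ω a (Finset.mem_insert_self a S')
        have hw00 : 0 ≤ w0 := hw0 _
        have hw10 : 0 ≤ w1 := hw0 _
        have base : f0 * w0 + f1 * w1 ≤ ((1 - p a) * f0 + p a * f1) * (w0 + w1) := by
          nlinarith [mul_nonneg (sub_nonneg.2 hmono) (sub_nonneg.2 hkey)]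
        have expand : g ω = (1 - p a) * f0 + p a * f1 := rfl
        have expandw : w' ω = w0 + w1 := rfl
        rw [expand, expandw, ← hP]
        nlinarith [mul_le_mul_of_nonneg_right base hP0]
    -- step 1
    have step1 : (∑ ω : E → Bool, f ω *
          (w ω * ∏ e ∈ (insert a S')ᶜ, (if ω e then p e else 1 - p e)))
        ≤ ∑ ω : E → Bool, g ω * (w' ω * ∏ e ∈ S'ᶜ, (if ω e then p e else 1 - p e)) := by
      rw [sum_split a (fun ω => f ω *
          (w ω * ∏ e ∈ (insert a S')ᶜ, (if ω e then p e else 1 - p e))),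
        sum_split a (fun ω => g ω *
          (w' ω * ∏ e ∈ S'ᶜ, (if ω e then p e else 1 - p e)))]
      exact Finset.sum_le_sum fun ω _ => point ω
    -- hypotheses for ih
    have hg_inc : IncreasingFn g := by
      intro ω ω' hle
      have h0 : ∀ e, update ω a false e ≤ update ω' a false e := by
        intro e
        by_cases hea : e = a
        · subst hea; simp
        · rw [update_of_ne hea, update_of_ne hea]; exact hle e
      have h1 : ∀ e, update ω a true e ≤ update ω' a true e := by
        intro e
        by_cases hea : e = a
        · subst hea; simp
        · rw [update_of_ne hea, update_of_ne hea]; exact hle e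
      have := hf h0
      have := hf h1
      simp only [hgdef]
      have hc0 : (0:ℝ) ≤ 1 - p a := by linarith
      nlinarith [hf h0, hf h1]
    have hw'0 : ∀ ω, 0 ≤ w' ω := fun ω => add_nonneg (hw0 _) (hw0 _)
    have hdep' : ∀ (ω : E → Bool) (e : E), e ∉ S' → ∀ b, w' (update ω e b) = w' ω := by
      intro ω e he b
      by_cases hea : e = a
      · subst hea
        simp only [hw', update_idem]
      · have hei : e ∉ insert a S' := by simp [hea, he]
        simp only [hw']
        rw [update_comm hea, update_comm hea, hdep _ e hei b, hdep _ e hei b]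
    have hratio' : ∀ (ω : E → Bool) (e : E), e ∈ S' →
        (1 - p e) * w' (update ω e true) ≤ p e * w' (update ω e false) := by
      intro ω e he
      have hea : e ≠ a := fun hh => ha (hh ▸ he)
      have hei : e ∈ insert a S' := Finset.mem_insert_of_mem he
      simp only [hw']
      rw [update_comm hea, update_comm hea, update_comm hea, update_comm hea]
      have r1 := hratio (update ω a false) e hei
      have r2 := hratio (update ω a true) e hei
      nlinarith [r1, r2]
    have step2 := ih w' g hg_inc hw'0 hdep' hratio'
    -- B g = B f
    have hBg : (∑ ω : E → Bool, g ω * ∏ e, (if ω e then p e else 1 - p e))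
        = ∑ ω : E → Bool, f ω * ∏ e, (if ω e then p e else 1 - p e) := by
      rw [sum_split a (fun ω => g ω * ∏ e, (if ω e then p e else 1 - p e)),
        sum_split a (fun ω => f ω * ∏ e, (if ω e then p e else 1 - p e))]
      refine Finset.sum_congr rfl fun ω _ => ?_
      by_cases hωa : ω a
      · simp [hωa]
      · rw [if_neg hωa, if_neg hωa]
        have hPu : ∀ b : Bool, (∏ e, (if update ω a b e then p e else 1 - p e))
            = (if b then p a else 1 - p a) *
              ∏ e ∈ univ.erase a, (if ω e then p e else 1 - p e) := by
          intro b
          rw [← Finset.mul_prod_erase univ _ (mem_univ a), update_self]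
          congr 1
          refine Finset.prod_congr rfl fun e he => ?_
          rw [update_of_ne (Finset.mem_erase.1 he).1]
        rw [hPu, hPu]
        have hg0 : g (update ω a false) = g ω := by simp only [hgdef, update_idem]
        have hg1 : g (update ω a true) = g ω := by simp only [hgdef, update_idem]
        rw [hg0, hg1]
        simp only [hgdef]
        norm_num
        ring
    -- sum w' P' = sum w P
    have hZ : (∑ ω : E → Bool, w' ω * ∏ e ∈ S'ᶜ, (if ω e then p e else 1 - p e))
        = ∑ ω : E → Bool, w ω * ∏ e ∈ (insert a S')ᶜ, (if ω e then p e else 1 - p e) := by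
      rw [sum_split a (fun ω => w' ω * ∏ e ∈ S'ᶜ, (if ω e then p e else 1 - p e)),
        sum_split a (fun ω => w ω * ∏ e ∈ (insert a S')ᶜ, (if ω e then p e else 1 - p e))]
      refine Finset.sum_congr rfl fun ω _ => ?_
      by_cases hωa : ω a
      · simp [hωa]
      · rw [if_neg hωa, if_neg hωa]
        have hwf : w' (update ω a false) = w' ω := by simp only [hw', update_idem]
        have hwt : w' (update ω a true) = w' ω := by simp only [hw', update_idem]
        have hPf : (∏ e ∈ S'ᶜ, (if update ω a false e then p e else 1 - p e))
            = (1 - p a) * ∏ e ∈ (insert a S')ᶜ, (if ω e then p e else 1 - p e) := by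
          rw [keyP', update_self, key1 ω false, if_neg (by simp)]
        have hPt : (∏ e ∈ S'ᶜ, (if update ω a true e then p e else 1 - p e))
            = p a * ∏ e ∈ (insert a S')ᶜ, (if ω e then p e else 1 - p e) := by
          rw [keyP', update_self, key1 ω true, if_pos rfl]
        rw [hwf, hwt, hPf, hPt, key1 ω false, key1 ω true]
        simp only [hw']
        ring
    calc (∑ ω : E → Bool, f ω *
          (w ω * ∏ e ∈ (insert a S')ᶜ, (if ω e then p e else 1 - p e)))
        ≤ ∑ ω : E → Bool, g ω * (w' ω * ∏ e ∈ S'ᶜ, (if ω e then p e else 1 - p e)) := step1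
      _ ≤ (∑ ω : E → Bool, g ω * ∏ e, (if ω e then p e else 1 - p e)) *
            ∑ ω : E → Bool, w' ω * ∏ e ∈ S'ᶜ, (if ω e then p e else 1 - p e) := step2
      _ = _ := by rw [hBg, hZ]
end Holley

/-- under condition (★), the free random-cluster measure is dominated by
the Bernoulli product measure with `p_e = 1 − exp(−qβJ_e)` on increasing functions. -/
theorem stmt6 {V E : Type*} [Fintype V] [Fintype E] (ends : E → V × V)
    (q : ℕ) (hq : 2 ≤ q) (β : ℝ) (hβ : 0 < β)
    (J : E → ℝ) (hJ : ∀ e, 0 ≤ J e)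
    (h : V → Fin q → ℝ) (hstar : StarCond q h)
    (f : (E → Bool) → ℝ) (hf : IncreasingFn f) :
    freeExp ends q β J h f ≤ bernExp q β J f := by
  
  classical
  have hq0 : 0 < q := lt_of_lt_of_le (by norm_num) hq
  set p : E → ℝ := fun e => 1 - Real.exp (-((q : ℝ) * β * J e)) with hp
  have hexple : ∀ e, Real.exp (-((q : ℝ) * β * J e)) ≤ 1 := by
    intro e
    rw [Real.exp_le_one_iff]
    have : (0:ℝ) ≤ (q : ℝ) * β * J e :=
      mul_nonneg (mul_nonneg (Nat.cast_nonneg q) hβ.le) (hJ e)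
    linarith
  have hp0 : ∀ e, 0 ≤ p e := fun e => by
    simp only [hp]; linarith [hexple e]
  have hp1 : ∀ e, p e ≤ 1 := fun e => by
    simp only [hp]; linarith [(Real.exp_pos (-((q : ℝ) * β * J e))).le]
  have h1p : ∀ e, 1 - p e = Real.exp (-((q : ℝ) * β * J e)) := fun e => by
    simp only [hp]; ring
  have key := holley_induction p hp0 hp1 (univ : Finset E)
    (freeWeight ends q β J h) f hf
    (fun ω => freeWeight_nonneg hq0 hβ hJ h ends ω)
    (fun ω e he b => absurd (mem_univ e) he)
    (fun ω e _ => by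
      rw [h1p e]
      exact freeWeight_ratio hq0 hβ hJ h ends ω e)
  rw [Finset.compl_univ] at key
  simp only [Finset.prod_empty, mul_one] at key
  have hB : (∑ ω : E → Bool, f ω * ∏ e, (if ω e then p e else 1 - p e))
      = bernExp q β J f := by
    unfold bernExp
    refine Finset.sum_congr rfl fun ω _ => ?_
    congr 1
    refine Finset.prod_congr rfl fun e _ => ?_
    rw [h1p e]
  have hZpos : 0 < ∑ ω : E → Bool, freeWeight ends q β J h ω := by
    refine Finset.sum_pos' (fun ω _ => freeWeight_nonneg hq0 hβ hJ h ends ω)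
      ⟨fun _ => false, mem_univ _, ?_⟩
    unfold freeWeight edgeFactor
    simp only [if_neg (by simp : ¬(false = true))]
    rw [Finset.prod_const_one, one_mul]
    exact gFree_pos hq0 β h _
  unfold freeExp
  rw [div_le_iff₀ hZpos]
  rw [hB] at key
  exact key
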